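/- For d = 3 and the H₊ state |H₊⟩ = ((1+√3)|0⟩ + |1⟩ + |2⟩)/√(2(3+√3)) in ℂ³, the min-thauma SDP has optimal value sup{ ⟨H₊|σ|H₊⟩ : σ positive semidefinite on ℂ³, ‖σ‖_{W,1} ≤ 1 } = 1/(3 − √3); that is, θ_min(H₊) = log₂(3 − √3). -/

import Mathlib

open Matrix Complex BigOperators
open scoped ComplexOrder

noncomputable section

namespace Magic

/-- ω = exp(2πi/d) -/
def omegaC (d : ℕ) : ℂ := Complex.exp (2 * Real.pi * Complex.I / d)

/-- τ = exp((d+1)πi/d) -/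
def tauC (d : ℕ) : ℂ := Complex.exp ((d + 1) * Real.pi * Complex.I / d)

/-- Shift operator X|j⟩ = |j⊕1⟩. -/
def shiftX (d : ℕ) [NeZero d] : Matrix (ZMod d) (ZMod d) ℂ :=
  Matrix.of fun r c => if r = c + 1 then 1 else 0

/-- Boost operator Z|j⟩ = ω^j |j⟩. -/
def boostZ (d : ℕ) [NeZero d] : Matrix (ZMod d) (ZMod d) ℂ :=
  Matrix.diagonal fun j => omegaC d ^ j.val

/-- Heisenberg–Weyl operator T_u = τ^{-a₁a₂} Z^{a₁} X^{a₂}. -/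
def HW (d : ℕ) [NeZero d] (u : ZMod d × ZMod d) : Matrix (ZMod d) (ZMod d) ℂ :=
  tauC d ^ (-((u.1.val * u.2.val : ℕ) : ℤ)) • (boostZ d ^ u.1.val * shiftX d ^ u.2.val)

/-- A₀ = (1/d) ∑_u T_u. -/
def A0 (d : ℕ) [NeZero d] : Matrix (ZMod d) (ZMod d) ℂ :=
  (d : ℂ)⁻¹ • ∑ u : ZMod d × ZMod d, HW d u

/-- Phase-space point operators A_u = T_u A₀ T_u†. -/
def Apt (d : ℕ) [NeZero d] (u : ZMod d × ZMod d) : Matrix (ZMod d) (ZMod d) ℂ :=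
  HW d u * A0 d * (HW d u)ᴴ

/-- Discrete Wigner function W_V(u) = tr(A_u V)/d. -/
def wig (d : ℕ) [NeZero d] (V : Matrix (ZMod d) (ZMod d) ℂ) (u : ZMod d × ZMod d) : ℂ :=
  (Apt d u * V).trace / d

/-- Wigner trace norm ‖V‖_{W,1} = ∑_u |W_V(u)|. -/
def wnorm1 (d : ℕ) [NeZero d] (V : Matrix (ZMod d) (ZMod d) ℂ) : ℝ :=
  ∑ u : ZMod d × ZMod d, ‖wig d V u‖

/-- Wigner spectral norm ‖V‖_{W,∞} = d · max_u |W_V(u)|. -/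
def wnormInf (d : ℕ) [NeZero d] (V : Matrix (ZMod d) (ZMod d) ℂ) : ℝ :=
  (d : ℝ) * ⨆ u : ZMod d × ZMod d, ‖wig d V u‖

end Magic

namespace Magic

/-- The Strange state |S⟩ = (|1⟩ - |2⟩)/√2. -/
def strange : ZMod 3 → ℂ :=
  fun j => if j = 1 then ((Real.sqrt 2)⁻¹ : ℝ)
    else if j = 2 then (-(Real.sqrt 2)⁻¹ : ℝ) else 0

/-- The Norrell state |N⟩ = (-|0⟩ + 2|1⟩ - |2⟩)/√6. -/
def norrell : ZMod 3 → ℂ :=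
  fun j => if j = 1 then ((2 / Real.sqrt 6 : ℝ) : ℂ) else ((-(Real.sqrt 6)⁻¹ : ℝ) : ℂ)

/-- The H₊ state |H₊⟩ = ((1+√3)|0⟩ + |1⟩ + |2⟩)/√(2(3+√3)). -/
def hplus : ZMod 3 → ℂ :=
  fun j => if j = 0 then (((1 + Real.sqrt 3) / Real.sqrt (2 * (3 + Real.sqrt 3)) : ℝ) : ℂ)
    else (((Real.sqrt (2 * (3 + Real.sqrt 3)))⁻¹ : ℝ) : ℂ)

/-- ξ = exp(2πi/9). -/
def xi : ℂ := Complex.exp (2 * Real.pi * Complex.I / 9)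

/-- The T state |T⟩ = (ξ|0⟩ + |1⟩ + ξ⁻¹|2⟩)/√3. -/
def tket : ZMod 3 → ℂ :=
  fun j => (if j = 0 then xi else if j = 1 then 1 else xi⁻¹) / ((Real.sqrt 3 : ℝ) : ℂ)

/-- The rank-one projector |ψ⟩⟨ψ|. -/
def projOf (ψ : ZMod 3 → ℂ) : Matrix (ZMod 3) (ZMod 3) ℂ :=
  Matrix.vecMulVec ψ (star ψ)

end Magic

namespace Magic

lemma omega_ne_zero : omegaC 3 ≠ 0 := Complex.exp_ne_zero _

lemma omega_pow_three : omegaC 3 ^ 3 = 1 := by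
  rw [omegaC, ← Complex.exp_nat_mul]
  rw [show ((3:ℕ):ℂ) * (2 * Real.pi * Complex.I / ((3:ℕ):ℂ)) = 2 * Real.pi * Complex.I by
    push_cast; field_simp]
  exact Complex.exp_two_pi_mul_I

lemma omega_ne_one : omegaC 3 ≠ 1 := by
  intro h
  rw [omegaC, Complex.exp_eq_one_iff] at h
  obtain ⟨n, hn⟩ := h
  have hπ : (Real.pi : ℂ) ≠ 0 := by exact_mod_cast Real.pi_ne_zero
  have h2 : (2 * (Real.pi:ℂ) * Complex.I) ≠ 0 := by
    simp [hπ, Complex.I_ne_zero]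
  have h3 : (1:ℂ) * (2 * (Real.pi:ℂ) * Complex.I) = ((3 * n : ℤ):ℂ) * (2 * (Real.pi:ℂ) * Complex.I) := by
    push_cast
    field_simp at hn
    linear_combination (2 * (Real.pi:ℂ) * Complex.I) * hn
  have h4 := mul_right_cancel₀ h2 h3
  have : (1:ℤ) = 3 * n := by exact_mod_cast h4
  omega

lemma omega_sum : 1 + omegaC 3 + omegaC 3 ^ 2 = 0 := by
  have key : (omegaC 3 - 1) * (1 + omegaC 3 + omegaC 3 ^ 2) = 0 := by
    linear_combination omega_pow_three
  rcases mul_eq_zero.mp key with h | h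
  · exact absurd (sub_eq_zero.mp h) omega_ne_one
  · exact h

lemma tau_eq : tauC 3 = omegaC 3 ^ 2 := by
  rw [tauC, omegaC, ← Complex.exp_nat_mul]
  congr 1
  push_cast
  ring

lemma omega_star : star (omegaC 3) = omegaC 3 ^ 2 := by
  have h1 : (starRingEnd ℂ) (omegaC 3) * omegaC 3 = 1 := by
    rw [omegaC, ← Complex.exp_conj, ← Complex.exp_add]
    rw [show (starRingEnd ℂ) (2 * Real.pi * Complex.I / ((3:ℕ):ℂ)) +
        2 * Real.pi * Complex.I / ((3:ℕ):ℂ) = 0 by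
      rw [map_div₀]
      simp [Complex.conj_I, Complex.conj_ofReal, map_ofNat]
      ring]
    exact Complex.exp_zero
  have h2 : omegaC 3 ^ 2 * omegaC 3 = 1 := by
    rw [← pow_succ]; exact omega_pow_three
  rw [Complex.star_def]
  have := mul_right_cancel₀ omega_ne_zero (h1.trans h2.symm)
  exact this

/-- character e(t) = ω^t -/
def ee (t : ZMod 3) : ℂ := omegaC 3 ^ t.val

lemma ee_zero : ee 0 = 1 := by simp [ee]
lemma ee_one : ee 1 = omegaC 3 := by
  rw [ee, show (1 : ZMod 3).val = 1 from rfl, pow_one]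
lemma ee_two : ee 2 = omegaC 3 ^ 2 := rfl

lemma sum_zmod3 {M : Type*} [AddCommMonoid M] (f : ZMod 3 → M) :
    ∑ x : ZMod 3, f x = f 0 + f 1 + f 2 := by
  have h : (Finset.univ : Finset (ZMod 3)) = {0, 1, 2} := by decide
  rw [h, Finset.sum_insert (by decide), Finset.sum_insert (by decide), Finset.sum_singleton,
    add_assoc]

lemma val_cast (t : ZMod 3) : ((t.val : ℕ) : ZMod 3) = t := by
  fin_cases t <;> rfl

lemma ee_nat (m : ℕ) : omegaC 3 ^ m = ee ((m : ℕ) : ZMod 3) := by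
  conv_lhs => rw [← Nat.div_add_mod m 3]
  rw [pow_add, pow_mul, omega_pow_three, one_pow, one_mul, ee, ZMod.val_natCast]

lemma ee_add (s t : ZMod 3) : ee (s + t) = ee s * ee t := by
  rw [show ee s * ee t = omegaC 3 ^ (s.val + t.val) by rw [ee, ee, pow_add],
    ee_nat, Nat.cast_add, val_cast, val_cast]

lemma ee_conj (t : ZMod 3) : star (ee t) = ee (-t) := by
  rw [ee, star_pow, omega_star, ← pow_mul, ee_nat, Nat.cast_mul, val_cast]
  congr 1
  rw [show ((2:ℕ) : ZMod 3) = -1 by decide]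
  ring

lemma char_sum (c : ZMod 3) : ∑ x : ZMod 3, ee (c * x) = if c = 0 then 3 else 0 := by
  have hc : c = 0 ∨ c = 1 ∨ c = 2 := by revert c; decide
  rcases hc with rfl | rfl | rfl <;> rw [sum_zmod3]
  · norm_num [ee_zero]
  · rw [show ((1:ZMod 3)*0) = 0 by decide, show ((1:ZMod 3)*1) = 1 by decide,
      show ((1:ZMod 3)*2) = 2 by decide, ee_zero, ee_one, ee_two, if_neg (by decide)]
    linear_combination omega_sum
  · rw [show ((2:ZMod 3)*0) = 0 by decide, show ((2:ZMod 3)*1) = 2 by decide,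
      show ((2:ZMod 3)*2) = 1 by decide, ee_zero, ee_one, ee_two, if_neg (by decide)]
    linear_combination omega_sum


-- Layer 2
lemma tau_zpow_neg (n : ℕ) : tauC 3 ^ (-(n:ℤ)) = omegaC 3 ^ n := by
  have h : tauC 3 ^ (n:ℤ) = omegaC 3 ^ (2*n) := by
    rw [zpow_natCast, tau_eq, ← pow_mul, mul_comm]
  rw [_root_.zpow_neg, h]
  refine inv_eq_of_mul_eq_one_left ?_
  rw [← pow_add]
  rw [show n + 2*n = 3*n by ring, pow_mul, omega_pow_three, one_pow]

lemma shiftX_pow (n : ℕ) :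
    shiftX 3 ^ n = Matrix.of fun r c => if r = c + (n : ZMod 3) then 1 else 0 := by
  induction n with
  | zero =>
    ext r c
    simp [Matrix.one_apply]
  | succ n ih =>
    rw [pow_succ, ih]
    ext r c
    rw [Matrix.mul_apply]
    rw [Finset.sum_eq_single (c+1) (fun p _ hp => by
      simp only [Matrix.of_apply, shiftX]
      rw [if_neg (fun h => hp h), mul_zero]) (fun h => absurd (Finset.mem_univ _) h)]
    simp only [Matrix.of_apply, shiftX, if_pos rfl, mul_one]
    push_cast
    rw [show c + 1 + (n:ZMod 3) = c + ((n:ZMod 3)+1) by ring, mul_one]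

lemma HW_eq (u : ZMod 3 × ZMod 3) :
    HW 3 u = Matrix.of fun j k =>
      ee (u.1 * u.2 + u.1 * j) * (if j = k + u.2 then 1 else 0) := by
  rw [HW, tau_zpow_neg, boostZ, Matrix.diagonal_pow, shiftX_pow]
  ext j k
  simp only [Matrix.smul_apply, Matrix.diagonal_mul, smul_eq_mul, Matrix.of_apply, Pi.pow_apply]
  rw [← pow_mul, ← mul_assoc, ← pow_add, ee_nat]
  rw [show ((u.1.val * u.2.val + j.val * u.1.val : ℕ) : ZMod 3) = u.1 * u.2 + u.1 * j by
    push_cast [val_cast]; ring]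
  rw [val_cast]

lemma A0_eq : A0 3 = Matrix.of fun j k => if j + k = 0 then 1 else 0 := by
  ext j k
  rw [A0, Matrix.smul_apply, Matrix.sum_apply]
  rw [show ∑ u : ZMod 3 × ZMod 3, HW 3 u j k
      = ∑ a : ZMod 3, ∑ b : ZMod 3, HW 3 (a, b) j k from Fintype.sum_prod_type _]
  have hin : ∀ a : ZMod 3, ∑ b : ZMod 3, HW 3 (a, b) j k = ee ((2*j - k) * a) := by
    intro a
    rw [Finset.sum_eq_single (j - k) (fun b _ hb => by
        rw [HW_eq]
        simp only [Matrix.of_apply]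
        rw [if_neg (fun h => hb (by linear_combination -h)), mul_zero])
      (fun h => absurd (Finset.mem_univ _) h)]
    rw [HW_eq]
    simp only [Matrix.of_apply]
    rw [if_pos (by ring), mul_one]
    congr 1
    ring
  simp only [hin]
  rw [char_sum]
  have h3 : (3 : ZMod 3) = 0 := by decide
  have hiff : (2*j - k = 0) ↔ (j + k = 0) := by
    constructor <;> intro h
    · linear_combination -h + j * h3
    · linear_combination -h + j * h3
  simp only [Matrix.of_apply, smul_eq_mul]
  by_cases hc : j + k = 0
  · rw [if_pos (hiff.mpr hc), if_pos hc]; norm_num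
  · rw [if_neg (fun h => hc (hiff.mp h)), if_neg hc, mul_zero]

lemma Apt_eq (u : ZMod 3 × ZMod 3) :
    Apt 3 u = Matrix.of fun j k => ee (u.1 * (j - k)) * (if j + k = 2 * u.2 then 1 else 0) := by
  obtain ⟨a, b⟩ := u
  rw [Apt, HW_eq, A0_eq]
  ext j k
  have h1 : ∀ q : ZMod 3, (((Matrix.of fun j k => ee (a * b + a * j) *
        (if j = k + b then (1:ℂ) else 0)) : Matrix (ZMod 3) (ZMod 3) ℂ) *
      ((Matrix.of fun j k => if j + k = 0 then (1:ℂ) else 0) : Matrix (ZMod 3) (ZMod 3) ℂ)) j q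
      = ee (a*b + a*j) * (if q = b - j then 1 else 0) := by
    intro q
    rw [Matrix.mul_apply]
    rw [Finset.sum_eq_single (j - b) (fun p _ hp => by
        simp only [Matrix.of_apply]
        rw [if_neg (fun h => hp (by linear_combination -h)), mul_zero, zero_mul])
      (fun h => absurd (Finset.mem_univ _) h)]
    simp only [Matrix.of_apply]
    rw [if_pos (by ring)]
    rw [mul_one]
    by_cases hq : q = b - j
    · rw [if_pos (by linear_combination hq), if_pos hq, mul_one]
    · rw [if_neg (fun h => hq (by linear_combination h)), if_neg hq, mul_zero]
  rw [Matrix.mul_apply]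
  simp only [Matrix.conjTranspose_apply, h1]
  rw [Finset.sum_eq_single (b - j) (fun q _ hq => by rw [if_neg hq, mul_zero, zero_mul])
    (fun h => absurd (Finset.mem_univ _) h)]
  rw [if_pos rfl, mul_one]
  simp only [Matrix.of_apply]
  rw [star_mul', apply_ite star, star_one, star_zero, ee_conj]
  by_cases hc : j + k = 2 * b
  · rw [if_pos (by linear_combination hc), if_pos hc, mul_one, mul_one, mul_comm, ← ee_add]
    congr 1
    ring
  · rw [if_neg (fun h => hc (by linear_combination h)), if_neg hc, mul_zero, mul_zero]
    simp

lemma wig_eq (V : Matrix (ZMod 3) (ZMod 3) ℂ) (u : ZMod 3 × ZMod 3) :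
    wig 3 V u = (3:ℂ)⁻¹ * ∑ j : ZMod 3, ee (2*u.1*(j - u.2)) * V (2*u.2 - j) j := by
  obtain ⟨a, b⟩ := u
  rw [wig, Apt_eq, Matrix.trace]
  rw [show ((3:ℕ):ℂ) = (3:ℂ) by norm_num, div_eq_mul_inv, mul_comm]
  congr 1
  apply Finset.sum_congr rfl
  intro j _
  rw [Matrix.diag_apply, Matrix.mul_apply]
  rw [Finset.sum_eq_single (2*b - j) (fun k _ hk => by
      simp only [Matrix.of_apply]
      rw [if_neg (fun h => hk (by linear_combination h)), mul_zero, zero_mul])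
    (fun h => absurd (Finset.mem_univ _) h)]
  simp only [Matrix.of_apply]
  rw [if_pos (by ring), mul_one]
  congr 2
  ring


-- Layer 3
def mmv : ℝ := (3 + Real.sqrt 3)/18
def ssv : ℝ := (3 - 2*Real.sqrt 3)/18
def yy (u : ZMod 3 × ZMod 3) : ℝ := if u.1 = 0 ∨ u.2 = 0 then mmv else ssv
def ccv : ℝ := Real.sqrt ((3 - Real.sqrt 3)/12)
def wvec : ZMod 3 → ℂ := fun j => if j = 0 then 0 else if j = 1 then (ccv:ℂ) else ((-ccv : ℝ):ℂ)
def sigStar : Matrix (ZMod 3) (ZMod 3) ℂ := Matrix.of fun _ _ => (3:ℂ)⁻¹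

lemma z3cases (t : ZMod 3) : t = 0 ∨ t = 1 ∨ t = 2 := by revert t; decide
lemma h3z : (3 : ZMod 3) = 0 := by decide

lemma char_sum' (γ : ZMod 3) : (1:ℂ) + ee γ + ee (γ*2) = if γ = 0 then 3 else 0 := by
  have h := char_sum γ
  rw [sum_zmod3] at h
  rw [← h, mul_zero, mul_one, ee_zero]

lemma rhs_entry (j k : ZMod 3) :
    (∑ u : ZMod 3 × ZMod 3, (yy u : ℂ) • Apt 3 u) j k
      = if j + k = 0 then (if j = k then ((3*mmv:ℝ):ℂ) else 0)
        else (if j = k then ((mmv+2*ssv:ℝ):ℂ) else ((mmv-ssv:ℝ):ℂ)) := by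
  rw [Matrix.sum_apply, Fintype.sum_prod_type]
  simp only [Apt_eq, Matrix.smul_apply, Matrix.of_apply, smul_eq_mul]
  have hinner : ∀ a : ZMod 3,
      ∑ b : ZMod 3, (yy (a,b) : ℂ) * (ee (a*(j-k)) * (if j + k = 2*b then 1 else 0))
      = (yy (a, 2*(j+k)) : ℂ) * ee (a*(j-k)) := by
    intro a
    rw [Finset.sum_eq_single (2*(j+k)) (fun b _ hb => by
        rw [if_neg (fun h => hb (by linear_combination -2*h - b*h3z)), mul_zero, mul_zero])
      (fun h => absurd (Finset.mem_univ _) h)]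
    rw [if_pos (by linear_combination -(j+k)*h3z), mul_one]
  simp only [hinner]
  rw [sum_zmod3 (fun a => (yy (a, 2*(j+k)) : ℂ) * ee (a*(j-k)))]
  rw [show ((0:ZMod 3)*(j-k)) = 0 from zero_mul _, ee_zero,
    show ((1:ZMod 3)*(j-k)) = j - k from one_mul _]
  have hy0 : yy (0, 2*(j+k)) = mmv := if_pos (Or.inl rfl)
  have hβ : (2*(j+k) = 0) ↔ (j + k = 0) := by
    constructor <;> intro h
    · linear_combination 2*h - (j+k)*h3z
    · rw [h, mul_zero]
  have hy12 : ∀ a : ZMod 3, a ≠ 0 → yy (a, 2*(j+k)) = if j + k = 0 then mmv else ssv := by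
    intro a ha
    by_cases hb : j + k = 0
    · rw [if_pos hb, yy, if_pos (Or.inr (hβ.mpr hb))]
    · rw [if_neg hb, yy, if_neg (by push_neg; exact ⟨ha, fun h => hb (hβ.mp h)⟩)]
  rw [hy0, hy12 1 (by decide), hy12 2 (by decide)]
  have hch := char_sum' (j - k)
  have hjk : (j - k = 0) ↔ (j = k) := sub_eq_zero
  rw [show ((2:ZMod 3)*(j-k)) = (j-k)*2 from mul_comm _ _]
  by_cases hb : j + k = 0
  · simp only [if_pos hb]
    by_cases he : j = k
    · rw [if_pos (hjk.mpr he)] at hch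
      rw [if_pos he]
      push_cast
      linear_combination (mmv:ℂ) * hch
    · rw [if_neg (fun h => he (hjk.mp h))] at hch
      rw [if_neg he]
      linear_combination (mmv:ℂ) * hch
  · simp only [if_neg hb]
    by_cases he : j = k
    · rw [if_pos (hjk.mpr he)] at hch
      rw [if_pos he]
      push_cast
      linear_combination (ssv:ℂ) * hch
    · rw [if_neg (fun h => he (hjk.mp h))] at hch
      rw [if_neg he]
      push_cast
      linear_combination (ssv:ℂ) * hch

lemma hp0 : hplus 0 = (((1 + Real.sqrt 3) / Real.sqrt (2 * (3 + Real.sqrt 3)) : ℝ) : ℂ) := by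
  simp [hplus]
lemma hp1 : hplus 1 = (((Real.sqrt (2 * (3 + Real.sqrt 3)))⁻¹ : ℝ) : ℂ) := by
  rw [hplus]; norm_num
lemma hp2 : hplus 2 = (((Real.sqrt (2 * (3 + Real.sqrt 3)))⁻¹ : ℝ) : ℂ) := by
  rw [hplus]; exact if_neg (by decide)
lemma hw0 : wvec 0 = 0 := by simp [wvec]
lemma hw1 : wvec 1 = (ccv : ℂ) := by rw [wvec]; norm_num
lemma hw2 : wvec 2 = ((-ccv : ℝ) : ℂ) := by
  rw [wvec, if_neg (by decide), if_neg (by decide)]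

lemma lhs_entry (j k : ZMod 3) :
    (Matrix.vecMulVec hplus (star hplus) + Matrix.vecMulVec wvec (star wvec)) j k
      = if j + k = 0 then (if j = k then ((3*mmv:ℝ):ℂ) else 0)
        else (if j = k then ((mmv+2*ssv:ℝ):ℂ) else ((mmv-ssv:ℝ):ℂ)) := by
  have h3 : Real.sqrt 3 ^ 2 = 3 := Real.sq_sqrt (by norm_num)
  have hs0 : (0:ℝ) ≤ Real.sqrt 3 := Real.sqrt_nonneg 3
  have hs3 : Real.sqrt 3 < 3 := by nlinarith
  have hrpos : 0 < Real.sqrt (2*(3+Real.sqrt 3)) := Real.sqrt_pos.mpr (by nlinarith)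
  have hr2 : Real.sqrt (2*(3+Real.sqrt 3)) ^ 2 = 2*(3+Real.sqrt 3) := Real.sq_sqrt (by nlinarith)
  have hc2 : ccv^2 = (3 - Real.sqrt 3)/12 := Real.sq_sqrt (by nlinarith)
  have hrne : Real.sqrt (2*(3+Real.sqrt 3)) ≠ 0 := ne_of_gt hrpos
  set s := Real.sqrt 3 with hsdef
  set r := Real.sqrt (2*(3+s)) with hrdef
  have R1 : (1+s)/r * ((1+s)/r) = 3*mmv := by
    rw [mmv]; rw [div_mul_div_comm, ← sq, ← sq, hr2]
    rw [div_eq_iff (by nlinarith)]; nlinarith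
  have hrr : r⁻¹ * r⁻¹ = 1/(2*(3+s)) := by
    rw [← hr2, sq, one_div, mul_inv]
  have hcc : ccv * ccv = (3-s)/12 := by rw [← sq]; exact hc2
  have R2 : (1+s)/r * r⁻¹ = mmv - ssv := by
    have h : (1+s)/r * r⁻¹ = (1+s)/(2*(3+s)) := by
      rw [← hr2, sq, division_def, division_def, mul_inv, mul_assoc]
    rw [h, mmv, ssv, div_eq_iff (by nlinarith)]
    linear_combination (-1/3 : ℝ)*h3
  have hkey12 : 1/(2*(3+s)) = (3-s)/12 := by
    rw [div_eq_div_iff (by nlinarith) (by norm_num)]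
    linear_combination (2:ℝ)*h3
  have R3 : r⁻¹ * r⁻¹ + ccv * ccv = mmv + 2*ssv := by
    rw [hrr, hcc, hkey12, mmv, ssv]; ring
  have R4 : r⁻¹ * r⁻¹ + ccv * -ccv = 0 := by
    rw [mul_neg, hrr, hcc, hkey12]; ring
  rcases z3cases j with rfl | rfl | rfl <;> rcases z3cases k with rfl | rfl | rfl <;>
    simp only [Matrix.add_apply, Matrix.vecMulVec_apply, Pi.star_apply, hp0, hp1, hp2,
      hw0, hw1, hw2, Complex.star_def, Complex.conj_ofReal, star_zero, mul_zero, zero_mul,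
      add_zero, zero_add]
  all_goals
    simp (config := { decide := true }) only [if_true, if_false]
    try rw [← hsdef]
    try rw [← hrdef]
    norm_cast
    try first
      | linear_combination R1
      | linear_combination R2
      | linear_combination R3
      | linear_combination R4

lemma trace_outer (v : ZMod 3 → ℂ) (σ : Matrix (ZMod 3) (ZMod 3) ℂ) :
    (Matrix.vecMulVec v (star v) * σ).trace = star v ⬝ᵥ σ.mulVec v := by
  rw [Matrix.trace]
  simp only [Matrix.diag_apply, Matrix.mul_apply, Matrix.vecMulVec_apply, dotProduct,
    Matrix.mulVec, Pi.star_apply]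
  rw [Finset.sum_comm]
  refine Finset.sum_congr rfl fun k _ => ?_
  rw [Finset.mul_sum]
  refine Finset.sum_congr rfl fun j _ => ?_
  ring

lemma key (σ : Matrix (ZMod 3) (ZMod 3) ℂ) :
    star hplus ⬝ᵥ σ.mulVec hplus + star wvec ⬝ᵥ σ.mulVec wvec
      = ∑ u : ZMod 3 × ZMod 3, (yy u : ℂ) * (3 * wig 3 σ u) := by
  have hY : Matrix.vecMulVec hplus (star hplus) + Matrix.vecMulVec wvec (star wvec)
      = ∑ u : ZMod 3 × ZMod 3, (yy u : ℂ) • Apt 3 u := by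
    ext j k
    rw [lhs_entry j k, rhs_entry j k]
  rw [← trace_outer hplus σ, ← trace_outer wvec σ, ← Matrix.trace_add, ← Matrix.add_mul, hY,
    Matrix.sum_mul, Matrix.trace_sum]
  refine Finset.sum_congr rfl fun u _ => ?_
  rw [Matrix.smul_mul, Matrix.trace_smul, wig, smul_eq_mul]
  congr 1
  rw [show ((3:ℕ):ℂ) = (3:ℂ) by norm_num]
  field_simp

lemma dot_sigStar (x : ZMod 3 → ℂ) :
    star x ⬝ᵥ sigStar.mulVec x
      = (3:ℂ)⁻¹ * (star (∑ i : ZMod 3, x i) * ∑ i : ZMod 3, x i) := by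
  simp only [sigStar, dotProduct, Matrix.mulVec, Matrix.of_apply, Pi.star_apply, star_sum]
  rw [← Finset.sum_mul, ← Finset.mul_sum]
  ring

lemma sigStar_psd : sigStar.PosSemidef := by
  refine Matrix.PosSemidef.of_dotProduct_mulVec_nonneg ?_ ?_
  · ext j k
    simp [sigStar, Matrix.conjTranspose_apply]
  · intro x
    rw [show star x ⬝ᵥ sigStar *ᵥ x = star x ⬝ᵥ sigStar.mulVec x from rfl, dot_sigStar]
    have h1 : star (∑ i : ZMod 3, x i) * (∑ i : ZMod 3, x i)
        = ((Complex.normSq (∑ i : ZMod 3, x i) : ℝ) : ℂ) := by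
      rw [Complex.star_def, mul_comm, Complex.mul_conj]
    rw [h1, show ((3:ℂ)⁻¹) * ((Complex.normSq (∑ i : ZMod 3, x i) : ℝ):ℂ)
        = (((3:ℝ)⁻¹ * Complex.normSq (∑ i : ZMod 3, x i) : ℝ) : ℂ) by push_cast; ring]
    exact Complex.zero_le_real.mpr (mul_nonneg (by norm_num) (Complex.normSq_nonneg _))

lemma wig_sigStar (u : ZMod 3 × ZMod 3) :
    wig 3 sigStar u = if u.1 = 0 then (3:ℂ)⁻¹ else 0 := by
  rw [wig_eq]
  simp only [sigStar, Matrix.of_apply]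
  rw [show (∑ j : ZMod 3, ee (2*u.1*(j - u.2)) * (3:ℂ)⁻¹)
      = (∑ j : ZMod 3, ee (2*u.1*(j - u.2))) * (3:ℂ)⁻¹ from (Finset.sum_mul _ _ _).symm]
  have hre : (∑ j : ZMod 3, ee (2*u.1*(j - u.2))) = ∑ x : ZMod 3, ee (2*u.1*x) := by
    rw [← Equiv.sum_comp (Equiv.subRight u.2) (fun x => ee (2*u.1*x))]
    rfl
  rw [hre, char_sum]
  have h2 : (2*u.1 = 0) ↔ (u.1 = 0) := by
    constructor <;> intro h
    · linear_combination 2*h - u.1*h3z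
    · rw [h, mul_zero]
  by_cases h : u.1 = 0
  · rw [if_pos (h2.mpr h), if_pos h]
    norm_num
  · rw [if_neg (fun hh => h (h2.mp hh)), if_neg h, zero_mul, mul_zero]

lemma wnorm1_sigStar : wnorm1 3 sigStar ≤ 1 := by
  rw [wnorm1, Fintype.sum_prod_type]
  simp only [wig_sigStar]
  rw [sum_zmod3 (fun a => ∑ b : ZMod 3, ‖(if ((a : ZMod 3), b).1 = 0 then (3:ℂ)⁻¹ else 0)‖)]
  simp (config := { decide := true }) only [sum_zmod3, if_true, if_false]
  norm_num [map_inv₀]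

lemma value_sigStar : (star hplus ⬝ᵥ sigStar.mulVec hplus).re = (3 - Real.sqrt 3)⁻¹ := by
  have h3 : Real.sqrt 3 ^ 2 = 3 := Real.sq_sqrt (by norm_num)
  have hs0 : (0:ℝ) ≤ Real.sqrt 3 := Real.sqrt_nonneg 3
  have hs3 : Real.sqrt 3 < 3 := by nlinarith
  have hrpos : 0 < Real.sqrt (2*(3+Real.sqrt 3)) := Real.sqrt_pos.mpr (by nlinarith)
  have hr2 : Real.sqrt (2*(3+Real.sqrt 3)) ^ 2 = 2*(3+Real.sqrt 3) := Real.sq_sqrt (by nlinarith)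
  have hrne : Real.sqrt (2*(3+Real.sqrt 3)) ≠ 0 := ne_of_gt hrpos
  rw [dot_sigStar]
  have hsum : (∑ i : ZMod 3, hplus i)
      = (((3 + Real.sqrt 3)/Real.sqrt (2*(3+Real.sqrt 3)) : ℝ) : ℂ) := by
    rw [sum_zmod3 hplus, hp0, hp1, hp2, ← Complex.ofReal_add, ← Complex.ofReal_add]
    congr 1
    rw [inv_eq_one_div, ← add_div, ← add_div]
    congr 1
    ring
  rw [hsum, Complex.star_def, Complex.conj_ofReal]
  rw [show (3:ℂ)⁻¹ * ((((3 + Real.sqrt 3)/Real.sqrt (2*(3+Real.sqrt 3)) : ℝ) : ℂ)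
        * (((3 + Real.sqrt 3)/Real.sqrt (2*(3+Real.sqrt 3)) : ℝ) : ℂ))
      = (((3:ℝ)⁻¹ * ((3 + Real.sqrt 3)/Real.sqrt (2*(3+Real.sqrt 3))
        * ((3 + Real.sqrt 3)/Real.sqrt (2*(3+Real.sqrt 3)))) : ℝ) : ℂ) by push_cast; ring,
    Complex.ofReal_re]
  rw [div_mul_div_comm, ← sq, ← sq, hr2]
  have hne1 : (3+Real.sqrt 3) ≠ 0 := by nlinarith
  have hne2 : (3-Real.sqrt 3) ≠ 0 := by nlinarith
  field_simp
  linear_combination -h3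

lemma ub (σ : Matrix (ZMod 3) (ZMod 3) ℂ) (hpsd : σ.PosSemidef) (hw : wnorm1 3 σ ≤ 1) :
    (star hplus ⬝ᵥ σ.mulVec hplus).re ≤ (3 - Real.sqrt 3)⁻¹ := by
  have h3 : Real.sqrt 3 ^ 2 = 3 := Real.sq_sqrt (by norm_num)
  have hs0 : (0:ℝ) ≤ Real.sqrt 3 := Real.sqrt_nonneg 3
  have hs3 : Real.sqrt 3 < 3 := by nlinarith
  have hkey := congrArg Complex.re (key σ)
  rw [Complex.add_re, Complex.re_sum] at hkey
  have hwnn : 0 ≤ (star wvec ⬝ᵥ σ.mulVec wvec).re := by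
    have h := hpsd.dotProduct_mulVec_nonneg wvec
    have := (Complex.le_def.mp h).1
    simpa using this
  have hterm : ∀ u : ZMod 3 × ZMod 3, ((yy u : ℂ) * (3 * wig 3 σ u)).re
      ≤ 3 * mmv * ‖wig 3 σ u‖ := by
    intro u
    have h1 : ((yy u : ℂ) * (3 * wig 3 σ u)).re = 3 * yy u * (wig 3 σ u).re := by
      rw [show (yy u : ℂ) * (3 * wig 3 σ u) = ((3 * yy u : ℝ) : ℂ) * wig 3 σ u by
        push_cast; ring, Complex.re_ofReal_mul]
    rw [h1]
    have hy : |yy u| ≤ mmv := by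
      rw [yy]
      split
      · exact le_of_eq (_root_.abs_of_nonneg (by rw [mmv]; positivity))
      · rw [ssv, mmv, abs_le]
        constructor <;> [nlinarith; nlinarith]
    calc 3 * yy u * (wig 3 σ u).re ≤ |3 * yy u * (wig 3 σ u).re| := le_abs_self _
      _ = 3 * |yy u| * |(wig 3 σ u).re| := by
          rw [abs_mul, abs_mul, _root_.abs_of_nonneg (by norm_num : (0:ℝ) ≤ 3)]
      _ ≤ 3 * mmv * ‖wig 3 σ u‖ := by
          have h2 := Complex.abs_re_le_norm (wig 3 σ u)
          have hmnn : (0:ℝ) ≤ mmv := by rw [mmv]; positivity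
          exact mul_le_mul (by nlinarith [hy]) h2 (abs_nonneg _) (by nlinarith [hmnn])
  have hbound : (∑ u : ZMod 3 × ZMod 3, ((yy u:ℂ) * (3 * wig 3 σ u)).re)
      ≤ 3 * mmv * wnorm1 3 σ := by
    rw [wnorm1, Finset.mul_sum]
    exact Finset.sum_le_sum fun u _ => hterm u
  have hmm_nonneg : (0:ℝ) ≤ 3 * mmv := by rw [mmv]; positivity
  have hfin : 3 * mmv = (3 - Real.sqrt 3)⁻¹ := by
    rw [mmv, inv_eq_one_div, show (3:ℝ)*((3+Real.sqrt 3)/18) = (3+Real.sqrt 3)/6 by ring,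
      div_eq_div_iff (by norm_num) (by nlinarith)]
    linear_combination -h3
  rw [← hfin]
  have hprod : 3 * mmv * wnorm1 3 σ ≤ 3 * mmv * 1 :=
    mul_le_mul_of_nonneg_left hw hmm_nonneg
  linarith


end Magic


namespace Magic

/-- θ_min of the H₊ state:
sup{ ⟨H₊|σ|H₊⟩ : σ ⪰ 0, ‖σ‖_{W,1} ≤ 1 } = 1/(3 - √3). -/
theorem hplus_minThauma_sdp :
    sSup {x : ℝ | ∃ σ : Matrix (ZMod 3) (ZMod 3) ℂ,
      σ.PosSemidef ∧ wnorm1 3 σ ≤ 1 ∧ x = (star hplus ⬝ᵥ σ.mulVec hplus).re}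
      = (3 - Real.sqrt 3)⁻¹ := by
  apply IsGreatest.csSup_eq
  constructor
  · exact ⟨sigStar, sigStar_psd, wnorm1_sigStar, value_sigStar.symm⟩
  · rintro x ⟨σ, hpsd, hw, rfl⟩
    exact ub σ hpsd hw


end Magic
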